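/- Let s, L, a be positive real numbers, let S : ℝ → ℝ satisfy S(t) ≥ 0 for all t ≥ 0, and let P : ℝ → ℝ be differentiable on [0,∞) with P(0) ≥ 0 and P'(t) = s(1 - P(t)/L)P(t) - a P(t) S(t) for all t ≥ 0. Then limsup_{t→∞} P(t) ≤ L. -/

import Mathlib

open Set Filter Real

/-- Key step: for every `ε > 0`, eventually `P t ≤ L + ε + ε`. -/
lemma eventually_P_le (s L a : ℝ) (hs : 0 < s) (hL : 0 < L) (ha : 0 < a)
    (S : ℝ → ℝ) (hS : ∀ t ∈ Set.Ici (0 : ℝ), 0 ≤ S t)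
    (P : ℝ → ℝ)
    (hP : ∀ t ∈ Set.Ici (0 : ℝ),
      HasDerivWithinAt P (s * (1 - P t / L) * P t - a * P t * S t) (Set.Ici 0) t)
    {ε : ℝ} (hε : 0 < ε) : ∀ᶠ t in atTop, P t ≤ L + ε + ε := by
  set K : ℝ := |P 0| + 1 with hK
  have hKpos : 0 < K := by positivity
  set μ : ℝ := s * ε / (2 * K) with hμ
  have hμpos : 0 < μ := by positivity
  have hKμ : K * μ = s * ε / 2 := by
    field_simp [hμ]
    rw [hμ]; field_simp
  set B : ℝ → ℝ := fun t => L + ε + K * Real.exp (-μ * t) with hBdef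
  set B' : ℝ → ℝ := fun t => K * (Real.exp (-μ * t) * (-μ)) with hB'def
  have hBderiv : ∀ x, HasDerivAt B (B' x) x := by
    intro x
    have h1 : HasDerivAt (fun t : ℝ => -μ * t) (-μ) x := by
      simpa using (hasDerivAt_id x).const_mul (-μ)
    have h2 : HasDerivAt (fun t : ℝ => Real.exp (-μ * t)) (Real.exp (-μ * x) * (-μ)) x :=
      (Real.hasDerivAt_exp _).comp x h1
    simpa [hBdef, hB'def] using ((h2.const_mul K).const_add (L + ε))
  -- comparison on every interval [0, b]
  have main : ∀ t ∈ Set.Ici (0 : ℝ), P t ≤ B t := by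
    intro t ht
    have hcomp := image_le_of_deriv_right_lt_deriv_boundary
      (f := P) (f' := fun x => s * (1 - P x / L) * P x - a * P x * S x)
      (a := 0) (b := t) (B := B) (B' := B')
      (fun x hx => ((hP x hx.1).continuousWithinAt).mono (fun y hy => hy.1))
      (fun x hx => (hP x hx.1).mono (Set.Ici_subset_Ici.mpr hx.1))
      (by
        have : P 0 ≤ |P 0| := le_abs_self _
        simp only [hBdef, mul_zero, Real.exp_zero, neg_zero, mul_one]
        nlinarith)
      hBderiv
      (by
        intro x hx hcontact
        have hE1 : Real.exp (-μ * x) ≤ 1 := by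
          apply Real.exp_le_one_iff.mpr
          nlinarith [hx.1]
        have hE0 : 0 < Real.exp (-μ * x) := Real.exp_pos _
        have hPx : L + ε ≤ P x := by
          rw [hcontact]
          simp only [hBdef]
          nlinarith
        have hPxpos : 0 < P x := by linarith
        have hSx : 0 ≤ S x := hS x hx.1
        have hdiv : P x / L * L = P x := div_mul_cancel₀ _ hL.ne'
        have hD : (1 : ℝ) ≤ P x / L := by
          rw [le_div_iff₀ hL]; nlinarith
        have hsε : 0 < s * ε := mul_pos hs hε
        have h2 : s * (1 - P x / L) * P x ≤ -(s * ε) := by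
          rw [← mul_le_mul_iff_of_pos_right hL]
          have h5 : P x / L * P x * L = P x * P x := by
            field_simp
          nlinarith [h5, mul_le_mul_of_nonneg_right
            (show ε ≤ P x - L by linarith) hPxpos.le,
            mul_le_mul_of_nonneg_left (show L ≤ P x by linarith) hsε.le]
        have h3 : 0 ≤ a * P x * S x := by positivity
        have hB'x : -(K * μ) ≤ B' x := by
          simp only [hB'def]
          nlinarith [mul_le_mul_of_nonneg_left hE1 (mul_pos hKpos hμpos).le]
        have : K * μ = s * ε / 2 := hKμ
        calc s * (1 - P x / L) * P x - a * P x * S x ≤ -(s * ε) := by linarith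
          _ < -(K * μ) := by rw [hKμ]; nlinarith
          _ ≤ B' x := hB'x)
    exact hcomp ⟨ht, le_refl t⟩
  -- `K * exp (-μ t) → 0`, so eventually `K * exp (-μ t) ≤ ε`
  have htend : Tendsto (fun t : ℝ => K * Real.exp (-μ * t)) atTop (nhds 0) := by
    have h1 : Tendsto (fun t : ℝ => -μ * t) atTop atBot :=
      (tendsto_const_mul_atBot_of_neg (by linarith : -μ < 0)).mpr tendsto_id
    simpa using (Real.tendsto_exp_atBot.comp h1).const_mul K
  have hev : ∀ᶠ t in atTop, K * Real.exp (-μ * t) ≤ ε :=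
    htend.eventually (eventually_le_nhds hε)
  filter_upwards [hev, eventually_ge_atTop (0 : ℝ)] with t h1 h2
  have := main t h2
  simp only [hBdef] at this
  linarith

/-- For the first population of the two-strain ecoepidemic competition model,
governed by `P' = s (1 - P/L) P - a P S` with `S ≥ 0`, `P 0 ≥ 0`, we have
`limsup_{t → ∞} P t ≤ L`. -/
theorem limsup_P_le_carrying_capacity
    (s L a : ℝ) (hs : 0 < s) (hL : 0 < L) (ha : 0 < a)
    (S : ℝ → ℝ) (hS : ∀ t ∈ Set.Ici (0 : ℝ), 0 ≤ S t)
    (P : ℝ → ℝ) (hP0 : 0 ≤ P 0)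
    (hP : ∀ t ∈ Set.Ici (0 : ℝ),
      HasDerivWithinAt P (s * (1 - P t / L) * P t - a * P t * S t) (Set.Ici 0) t) :
    Filter.limsup P Filter.atTop ≤ L := by
  have key : ∀ ε > (0 : ℝ), Filter.limsup P Filter.atTop ≤ L + ε := by
    intro ε hε
    have hev := eventually_P_le s L a hs hL ha S hS P hP (half_pos hε)
    have hev' : ∀ᶠ t in atTop, P t ≤ L + ε := by
      filter_upwards [hev] with t ht; linarith
    rw [Filter.limsup, Filter.limsSup]
    have hmem : (L + ε) ∈ {a | ∀ᶠ n in Filter.map P atTop, n ≤ a} := by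
      simpa [Filter.eventually_map] using hev'
    by_cases hbdd : BddBelow {a | ∀ᶠ n in Filter.map P atTop, (n : ℝ) ≤ a}
    · exact csInf_le hbdd hmem
    · rw [Real.sInf_of_not_bddBelow hbdd]
      positivity
  exact le_of_forall_pos_le_add key
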